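/- Let n ≥ 1, k ∈ {1,…,n}, and q₁,…,qₙ ∈ ℕ with N = q₁ + ⋯ + qₙ, and suppose that for each residue s ∈ {1,…,k} the sequence j ↦ q_{jk+s} + j (over indices jk + s ≤ n) is strictly increasing. Then the coefficient of ∏_{j=1}^n x_j^{k·q_j + j − 1} in (x₁^k + ⋯ + xₙ^k)^N · ∏_{1 ≤ i < j ≤ n}(x_j − x_i) is a nonzero integer dividing N!. -/

import Mathlib

open Finset Matrix

lemma prod_Ioi_comm' {M : Type*} [CommMonoid M] {m : ℕ} (f : Fin m → Fin m → M) :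
    ∏ i : Fin m, ∏ j ∈ Ioi i, f i j = ∏ j : Fin m, ∏ i ∈ Iio j, f i j := by
  apply prod_comm'
  intro x y
  simp [mem_Ioi, mem_Iio, and_comm]

lemma vand_dvd_fact {m : ℕ} (a : Fin m → ℕ) (ha : StrictMono a) :
    (∏ j : Fin m, ∏ i ∈ Iio j, (a j - a i)) ∣ ∏ j : Fin m, (a j).factorial := by
  apply Finset.prod_dvd_prod_of_dvd
  intro j _
  have hinj : Set.InjOn (fun i => a j - a i) (Iio j : Finset (Fin m)) := by
    intro i1 h1 i2 h2 h
    simp only [mem_coe, mem_Iio] at h1 h2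
    simp only at h
    have l1 := ha h1
    have l2 := ha h2
    have : a i1 = a i2 := by omega
    exact ha.injective this
  have himg : ∏ i ∈ Iio j, (a j - a i)
      = ∏ x ∈ (Iio j).image (fun i => a j - a i), x :=
    (Finset.prod_image (f := fun x => x) hinj).symm
  rw [himg]
  have hfact : (a j).factorial = ∏ x ∈ (Finset.range (a j)).image (· + 1), x := by
    rw [Finset.prod_image (by intro x _ y _ h; simp only at h; omega), prod_range_add_one_eq_factorial]
  rw [hfact]
  apply Finset.prod_dvd_prod_of_subset
  intro x hx
  simp only [Finset.mem_image, mem_Iio] at hx ⊢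
  obtain ⟨i, hi, rfl⟩ := hx
  have l1 := ha hi
  exact ⟨a j - a i - 1, Finset.mem_range.2 (by omega), by omega⟩

lemma det_inv_fact {m : ℕ} (a : Fin m → ℕ) (ha : StrictMono a) :
    (Matrix.of fun i j : Fin m =>
        if (i : ℕ) ≤ a j then (1 : ℚ) / (a j - (i : ℕ)).factorial else 0).det
      = (∏ j : Fin m, ∏ i ∈ Iio j, ((a j : ℚ) - (a i : ℚ)))
        / ∏ j : Fin m, ((a j).factorial : ℚ) := by
  have hF : ∀ j : Fin m, ((a j).factorial : ℚ) ≠ 0 := fun j =>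
    Nat.cast_ne_zero.2 (a j).factorial_ne_zero
  have key : (Matrix.of fun i j : Fin m => (((a j).descFactorial (i : ℕ) : ℕ) : ℚ)).det
      = (∏ j : Fin m, ((a j).factorial : ℚ)) *
        (Matrix.of fun i j : Fin m =>
          if (i : ℕ) ≤ a j then (1 : ℚ) / (a j - (i : ℕ)).factorial else 0).det := by
    rw [← Matrix.det_mul_row (fun j : Fin m => ((a j).factorial : ℚ))]
    congr 1
    ext i j
    simp only [Matrix.of_apply]
    by_cases h : (i : ℕ) ≤ a j
    · rw [if_pos h]
      have := Nat.factorial_mul_descFactorial h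
      have hne : ((a j - (i : ℕ)).factorial : ℚ) ≠ 0 :=
        Nat.cast_ne_zero.2 (a j - (i : ℕ)).factorial_ne_zero
      field_simp
      push_cast [← this]
      ring
    · rw [if_neg h, mul_zero]
      rw [Nat.descFactorial_eq_zero_iff_lt.2 (by omega)]
      simp
  have key2 : (Matrix.of fun i j : Fin m => (((a j).descFactorial (i : ℕ) : ℕ) : ℚ)).det
      = ∏ j : Fin m, ∏ i ∈ Iio j, ((a j : ℚ) - (a i : ℚ)) := by
    have h1 : (Matrix.of fun i j : Fin m => (((a j).descFactorial (i : ℕ) : ℕ) : ℚ))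
        = (Matrix.of fun i j : Fin m =>
            Polynomial.eval ((a i : ℚ)) (descPochhammer ℚ (j : ℕ)))ᵀ := by
      ext i j
      simp [descPochhammer_eval_eq_descFactorial]
    rw [h1, Matrix.det_transpose,
      ← Matrix.det_eval_matrixOfPolynomials_eq_det_vandermonde (fun i : Fin m => (a i : ℚ))
        (fun i => descPochhammer ℚ (i : ℕ))
        (fun i => descPochhammer_natDegree ℚ (i : ℕ))
        (fun i => monic_descPochhammer ℚ (i : ℕ)),
      Matrix.det_vandermonde]
    exact prod_Ioi_comm' _
  rw [eq_div_iff (Finset.prod_ne_zero_iff.2 fun j _ => hF j), mul_comm, ← key, key2]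
open MvPolynomial Finset

lemma prod_X_pow_univ {n : ℕ} (e : Fin n → ℕ) :
    (∏ j : Fin n, (X j : MvPolynomial (Fin n) ℤ) ^ e j)
      = monomial (Finsupp.equivFunOnFinite.symm e) 1 := by
  set s : Fin n →₀ ℕ := Finsupp.equivFunOnFinite.symm e with hs
  have hse : ∀ j, s j = e j := fun j => rfl
  rw [← MvPolynomial.prod_X_pow_eq_monomial (s := s)]
  rw [← Finset.prod_subset (Finset.subset_univ s.support)]
  · exact Finset.prod_congr rfl fun j _ => by rw [hse]
  · intro x _ hx
    rw [← hse, Finsupp.notMem_support_iff.1 hx, pow_zero]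

lemma coeff_sum_pow {n k N : ℕ} (hk : 1 ≤ k) (c : Fin n →₀ ℕ) :
    MvPolynomial.coeff c ((∑ j : Fin n, (X j : MvPolynomial (Fin n) ℤ) ^ k) ^ N)
      = if (∀ j, k ∣ c j) ∧ (∑ j : Fin n, c j = k * N)
        then (Nat.multinomial Finset.univ (fun j => c j / k) : ℤ) else 0 := by
  rw [Finset.sum_pow_eq_sum_piAntidiag, MvPolynomial.coeff_sum]
  have hterm : ∀ g : Fin n → ℕ,
      MvPolynomial.coeff c ((Nat.multinomial Finset.univ g : MvPolynomial (Fin n) ℤ) *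
        ∏ i : Fin n, ((X i : MvPolynomial (Fin n) ℤ) ^ k) ^ g i)
      = (Nat.multinomial Finset.univ g : ℤ) *
        (if Finsupp.equivFunOnFinite.symm (fun i => k * g i) = c then 1 else 0) := by
    intro g
    have h1 : ∏ i : Fin n, ((X i : MvPolynomial (Fin n) ℤ) ^ k) ^ g i
        = monomial (Finsupp.equivFunOnFinite.symm (fun i => k * g i)) 1 := by
      rw [← prod_X_pow_univ (fun i => k * g i)]
      exact Finset.prod_congr rfl fun i _ => by rw [← pow_mul]
    rw [h1]
    rw [show ((Nat.multinomial Finset.univ g : MvPolynomial (Fin n) ℤ))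
        = C ((Nat.multinomial Finset.univ g : ℤ)) from
      (map_natCast (C : ℤ →+* MvPolynomial (Fin n) ℤ) _).symm]
    rw [MvPolynomial.coeff_C_mul, MvPolynomial.coeff_monomial]
  simp only [hterm]
  by_cases H : (∀ j, k ∣ c j) ∧ (∑ j : Fin n, c j = k * N)
  · rw [if_pos H]
    obtain ⟨hdvd, hsum⟩ := H
    have hg0mem : (fun j => c j / k) ∈ Finset.piAntidiag Finset.univ N := by
      rw [Finset.mem_piAntidiag]
      refine ⟨?_, fun i _ => Finset.mem_univ i⟩
      have : k * ∑ j : Fin n, c j / k = k * N := by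
        rw [Finset.mul_sum]
        rw [Finset.sum_congr rfl fun j _ => Nat.mul_div_cancel' (hdvd j)]
        exact hsum
      exact Nat.eq_of_mul_eq_mul_left hk this
    rw [Finset.sum_eq_single (fun j => c j / k)]
    · rw [if_pos, mul_one]
      apply Finsupp.ext
      intro j
      simp only [Finsupp.equivFunOnFinite_symm_apply_apply]
      exact Nat.mul_div_cancel' (hdvd j)
    · intro g hg hgne
      rw [if_neg, mul_zero]
      intro heq
      apply hgne
      funext j
      have : k * g j = c j := by
        have := DFunLike.congr_fun heq j
        simpa using this
      rw [← this, Nat.mul_div_cancel_left _ hk]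
    · intro h
      exact absurd hg0mem h
  · rw [if_neg H]
    apply Finset.sum_eq_zero
    intro g hg
    rw [if_neg, mul_zero]
    intro heq
    apply H
    have hc : ∀ j, c j = k * g j := by
      intro j
      have := DFunLike.congr_fun heq j
      simpa using this.symm
    rw [Finset.mem_piAntidiag] at hg
    constructor
    · exact fun j => (hc j) ▸ Dvd.intro _ rfl
    · rw [Finset.sum_congr rfl fun j _ => hc j, ← Finset.mul_sum, hg.1]
open Finset Matrix

def resEquiv (n k s : ℕ) (hk1 : 1 ≤ k) (hs : s < k) (hkn : k ≤ n) :
    Fin ((n - 1 - s) / k + 1) ≃ {i : Fin n // (i : ℕ) % k = s} where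
  toFun i := ⟨⟨(i : ℕ) * k + s, by
      have h1 : (i : ℕ) ≤ (n - 1 - s) / k := by omega
      have h2 : (i : ℕ) * k ≤ n - 1 - s := (Nat.le_div_iff_mul_le hk1).1 h1
      omega⟩, by
      simp only
      rw [Nat.mul_comm, Nat.mul_add_mod, Nat.mod_eq_of_lt hs]⟩
  invFun j := ⟨(j : Fin n) / k, by
      have hj : ((j : Fin n) : ℕ) % k = s := j.2
      have h1 : k * (((j : Fin n) : ℕ) / k) + s = (j : Fin n) := by
        conv_rhs => rw [← Nat.div_add_mod ((j : Fin n) : ℕ) k, hj]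
      have h2 : ((j : Fin n) : ℕ) ≤ n - 1 := by have := (j : Fin n).2; omega
      have h3 : (((j : Fin n) : ℕ) / k) * k ≤ n - 1 - s := by
        rw [Nat.mul_comm]; omega
      have := (Nat.le_div_iff_mul_le hk1).2 h3
      omega⟩
  left_inv i := by
    ext
    simp only
    rw [Nat.add_comm, Nat.add_mul_div_right _ _ hk1, Nat.div_eq_of_lt hs]
    omega
  right_inv j := by
    ext
    simp only
    have hj : ((j : Fin n) : ℕ) % k = s := j.2
    conv_rhs => rw [← Nat.div_add_mod ((j : Fin n) : ℕ) k, hj]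
    ring

lemma entry_eq (k Q i j s : ℕ) (hk1 : 1 ≤ k) :
    (if (i * k + s ≤ k * Q + (j * k + s) ∧ k ∣ (k * Q + (j * k + s) - (i * k + s)))
      then (1 : ℚ) / Nat.factorial ((k * Q + (j * k + s) - (i * k + s)) / k) else 0)
    = if i ≤ Q + j then (1 : ℚ) / Nat.factorial (Q + j - i) else 0 := by
  have e1 : k * Q + (j * k + s) = k * (Q + j) + s := by ring
  by_cases hij : i ≤ Q + j
  · have e2 : k * (Q + j) = k * i + k * (Q + j - i) := by
      rw [← Nat.mul_add]; congr 1; omega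
    have e4 : i * k = k * i := Nat.mul_comm _ _
    have hnum : k * Q + (j * k + s) - (i * k + s) = k * (Q + j - i) := by omega
    rw [if_pos hij, if_pos ⟨by omega, hnum ▸ Dvd.intro _ rfl⟩, hnum,
      Nat.mul_div_cancel_left _ hk1]
  · rw [if_neg hij, if_neg]
    rintro ⟨h1, -⟩
    have e4 : i * k = k * i := Nat.mul_comm _ _
    have h2 : k * i ≤ k * (Q + j) := by omega
    exact hij (Nat.le_of_mul_le_mul_left h2 (by omega))

lemma block_det (n k s : ℕ) (hk1 : 1 ≤ k) (hs : s < k) (hkn : k ≤ n) (q : ℕ → ℕ)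
    (ha : StrictMono (fun i : Fin ((n - 1 - s) / k + 1) => q ((i : ℕ) * k + s + 1) + (i : ℕ))) :
    ((Matrix.of fun i j : Fin n =>
        if ((i : ℕ) ≤ k * q ((j : ℕ) + 1) + (j : ℕ) ∧
            k ∣ (k * q ((j : ℕ) + 1) + (j : ℕ) - (i : ℕ)))
          then (1 : ℚ) / Nat.factorial ((k * q ((j : ℕ) + 1) + (j : ℕ) - (i : ℕ)) / k)
          else 0).toSquareBlock (fun i : Fin n => (i : ℕ) % k) s).det
    = ((∏ j : Fin ((n - 1 - s) / k + 1), ∏ i ∈ Iio j,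
          ((q ((j : ℕ) * k + s + 1) + (j : ℕ)) - (q ((i : ℕ) * k + s + 1) + (i : ℕ))) : ℕ) : ℚ)
      / ((∏ j : Fin ((n - 1 - s) / k + 1),
          (q ((j : ℕ) * k + s + 1) + (j : ℕ)).factorial : ℕ) : ℚ) := by
  set e := resEquiv n k s hk1 hs hkn with he
  set M := (Matrix.of fun i j : Fin n =>
        if ((i : ℕ) ≤ k * q ((j : ℕ) + 1) + (j : ℕ) ∧
            k ∣ (k * q ((j : ℕ) + 1) + (j : ℕ) - (i : ℕ)))
          then (1 : ℚ) / Nat.factorial ((k * q ((j : ℕ) + 1) + (j : ℕ) - (i : ℕ)) / k)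
          else 0) with hM
  have hsub : ((M.toSquareBlock (fun i : Fin n => (i : ℕ) % k) s).submatrix e e)
      = Matrix.of (fun i j : Fin ((n - 1 - s) / k + 1) =>
          if (i : ℕ) ≤ q ((j : ℕ) * k + s + 1) + (j : ℕ)
          then (1 : ℚ) / (q ((j : ℕ) * k + s + 1) + (j : ℕ) - (i : ℕ)).factorial else 0) := by
    ext i j
    have h := entry_eq k (q ((j : ℕ) * k + s + 1)) (i : ℕ) (j : ℕ) s hk1
    exact h
  have h1 := Matrix.det_submatrix_equiv_self e
    (M.toSquareBlock (fun i : Fin n => (i : ℕ) % k) s)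
  rw [← h1, hsub, det_inv_fact _ ha, Nat.cast_prod, Nat.cast_prod]
  have hnum : ∀ j : Fin ((n - 1 - s) / k + 1), ∀ i ∈ Iio j,
      ((q ((j : ℕ) * k + s + 1) + (j : ℕ) : ℚ) - (q ((i : ℕ) * k + s + 1) + (i : ℕ) : ℚ))
      = ((q ((j : ℕ) * k + s + 1) + (j : ℕ) - (q ((i : ℕ) * k + s + 1) + (i : ℕ)) : ℕ) : ℚ) := by
    intro j i hi
    rw [Nat.cast_sub (le_of_lt (ha (Finset.mem_Iio.1 hi)))]
    push_cast
    ring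
  congr 1
  apply Finset.prod_congr rfl
  intro j _
  rw [Nat.cast_prod]
  apply Finset.prod_congr rfl
  intro i hi
  push_cast
  rw [← hnum j i hi]
open MvPolynomial Finset

theorem stmt_2 (n k : ℕ) (hn : 1 ≤ n) (hk1 : 1 ≤ k) (hkn : k ≤ n)
    (q : ℕ → ℕ) (N : ℕ) (hN : N = ∑ i ∈ Finset.Icc 1 n, q i)
    (hmono : ∀ s, 1 ≤ s → s ≤ k → ∀ i j : ℕ, i < j → j * k + s ≤ n →
      q (i * k + s) + i < q (j * k + s) + j) :
    (MvPolynomial.coeff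
        (Finsupp.equivFunOnFinite.symm fun j : Fin n => k * q (j.1 + 1) + j.1)
        (((∑ j : Fin n, (X j : MvPolynomial (Fin n) ℤ) ^ k) ^ N) *
          ∏ j : Fin n, ∏ i ∈ Finset.univ.filter (· < j), (X j - X i)) : ℤ) ≠ 0 ∧
    (MvPolynomial.coeff
        (Finsupp.equivFunOnFinite.symm fun j : Fin n => k * q (j.1 + 1) + j.1)
        (((∑ j : Fin n, (X j : MvPolynomial (Fin n) ℤ) ^ k) ^ N) *
          ∏ j : Fin n, ∏ i ∈ Finset.univ.filter (· < j), (X j - X i)) : ℤ) ∣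
      (N.factorial : ℤ) := by
  classical
  set d : Fin n →₀ ℕ :=
    Finsupp.equivFunOnFinite.symm fun j : Fin n => k * q (j.1 + 1) + j.1 with hd
  set P : MvPolynomial (Fin n) ℤ := (∑ j : Fin n, (X j) ^ k) ^ N with hP
  set Q : MvPolynomial (Fin n) ℤ :=
    ∏ j : Fin n, ∏ i ∈ Finset.univ.filter (· < j), (X j - X i) with hQdef
  set z : ℤ := MvPolynomial.coeff d (P * Q) with hzdef
  have hdapp : ∀ j : Fin n, d j = k * q ((j : ℕ) + 1) + (j : ℕ) := fun j => rfl
  have hq : ∑ j : Fin n, q ((j : ℕ) + 1) = ∑ i ∈ Finset.Icc 1 n, q i := by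
    rw [Fin.sum_univ_eq_sum_range (fun j => q (j + 1)) n]
    rw [show Finset.Icc 1 n = Finset.Ico 1 (n + 1) by ext; simp]
    rw [Finset.sum_Ico_eq_sum_range]
    simp [Nat.add_comm]
  have hsum : ∑ j : Fin n, d j = k * N + ∑ j : Fin n, (j : ℕ) := by
    simp only [hdapp]
    rw [Finset.sum_add_distrib, ← Finset.mul_sum, hq, ← hN]
  set w : Equiv.Perm (Fin n) → (Fin n →₀ ℕ) :=
    fun σ => Finsupp.equivFunOnFinite.symm (fun j : Fin n => ((σ⁻¹ j : Fin n) : ℕ)) with hw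
  have hfil : ∀ j : Fin n, Finset.univ.filter (· < j) = Iio j := by
    intro j; ext i; simp [Finset.mem_Iio]
  have hQ : Q = ∑ σ : Equiv.Perm (Fin n),
      (Equiv.Perm.sign σ : ℤ) • monomial (w σ) (1 : ℤ) := by
    have h1 : Q = (Matrix.vandermonde
        (fun i : Fin n => (X i : MvPolynomial (Fin n) ℤ))).det := by
      rw [hQdef, Matrix.det_vandermonde]
      rw [prod_Ioi_comm' (fun i j : Fin n => (X j : MvPolynomial (Fin n) ℤ) - X i)]
      exact Finset.prod_congr rfl fun j _ => by rw [hfil]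
    rw [h1, Matrix.det_apply]
    apply Finset.sum_congr rfl
    intro σ _
    rw [Units.smul_def]
    congr 1
    calc ∏ i : Fin n, Matrix.vandermonde
          (fun i : Fin n => (X i : MvPolynomial (Fin n) ℤ)) (σ i) i
        = ∏ i : Fin n, (fun j : Fin n =>
            (X j : MvPolynomial (Fin n) ℤ) ^ ((σ⁻¹ j : Fin n) : ℕ)) (σ i) :=
          Finset.prod_congr rfl fun i _ => by
            simp [Matrix.vandermonde_apply, Equiv.Perm.inv_def]
      _ = ∏ j : Fin n, (X j : MvPolynomial (Fin n) ℤ) ^ ((σ⁻¹ j : Fin n) : ℕ) :=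
          Equiv.prod_comp σ
            (fun j : Fin n => (X j : MvPolynomial (Fin n) ℤ) ^ ((σ⁻¹ j : Fin n) : ℕ))
      _ = monomial (w σ) 1 := prod_X_pow_univ _
  have hz : z = ∑ σ : Equiv.Perm (Fin n), (Equiv.Perm.sign σ : ℤ) *
      (if w σ ≤ d then MvPolynomial.coeff (d - w σ) P else 0) := by
    rw [hzdef, hQ, Finset.mul_sum, MvPolynomial.coeff_sum]
    apply Finset.sum_congr rfl
    intro σ _
    rw [mul_smul_comm, MvPolynomial.coeff_smul, smul_eq_mul]
    congr 1
    rw [MvPolynomial.coeff_mul_monomial']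
    split_ifs with h
    · rw [mul_one]
    · rfl
  set G : Matrix (Fin n) (Fin n) ℚ := Matrix.of fun i j : Fin n =>
    if ((i : ℕ) ≤ k * q ((j : ℕ) + 1) + (j : ℕ) ∧
        k ∣ (k * q ((j : ℕ) + 1) + (j : ℕ) - (i : ℕ)))
      then (1 : ℚ) / Nat.factorial ((k * q ((j : ℕ) + 1) + (j : ℕ) - (i : ℕ)) / k)
      else 0 with hG
  have hGapp : ∀ i j : Fin n, G i j =
      if ((i : ℕ) ≤ k * q ((j : ℕ) + 1) + (j : ℕ) ∧
          k ∣ (k * q ((j : ℕ) + 1) + (j : ℕ) - (i : ℕ)))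
        then (1 : ℚ) / Nat.factorial ((k * q ((j : ℕ) + 1) + (j : ℕ) - (i : ℕ)) / k)
        else 0 := fun i j => rfl
  have hterm : ∀ σ : Equiv.Perm (Fin n),
      ((if w σ ≤ d then MvPolynomial.coeff (d - w σ) P else 0 : ℤ) : ℚ)
      = (N.factorial : ℚ) * ∏ i : Fin n, G (σ⁻¹ i) i := by
    intro σ
    by_cases hC : ∀ i : Fin n, ((σ⁻¹ i : Fin n) : ℕ) ≤ k * q ((i : ℕ) + 1) + (i : ℕ) ∧
        k ∣ (k * q ((i : ℕ) + 1) + (i : ℕ) - ((σ⁻¹ i : Fin n) : ℕ))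
    · set f : Fin n → ℕ :=
        fun i => (k * q ((i : ℕ) + 1) + (i : ℕ) - ((σ⁻¹ i : Fin n) : ℕ)) / k with hf
      have hle : w σ ≤ d := Finsupp.le_def.2 fun i => (hC i).1
      have hsubapp : ∀ i : Fin n, (d - w σ) i
          = k * q ((i : ℕ) + 1) + (i : ℕ) - ((σ⁻¹ i : Fin n) : ℕ) :=
        fun i => Finsupp.tsub_apply d (w σ) i
      have hsumsig : ∑ i : Fin n, ((σ⁻¹ i : Fin n) : ℕ) = ∑ i : Fin n, (i : ℕ) :=
        Equiv.sum_comp σ⁻¹ (fun i : Fin n => (i : ℕ))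
      have hsubsum : ∑ i : Fin n, (k * q ((i : ℕ) + 1) + (i : ℕ) - ((σ⁻¹ i : Fin n) : ℕ))
          = k * N := by
        have h2 : ∑ i : Fin n, ((k * q ((i : ℕ) + 1) + (i : ℕ) - ((σ⁻¹ i : Fin n) : ℕ))
            + ((σ⁻¹ i : Fin n) : ℕ)) = ∑ i : Fin n, d i :=
          Finset.sum_congr rfl fun i _ => by
            rw [Nat.sub_add_cancel (hC i).1]; exact (hdapp i).symm
        rw [Finset.sum_add_distrib, hsumsig, hsum] at h2
        omega
      have hsumf : ∑ i : Fin n, f i = N := by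
        apply Nat.eq_of_mul_eq_mul_left (show 0 < k by omega)
        rw [Finset.mul_sum]
        rw [Finset.sum_congr rfl fun i _ => Nat.mul_div_cancel' (hC i).2]
        exact hsubsum
      have hcond : (∀ j : Fin n, k ∣ (d - w σ) j) ∧ (∑ j : Fin n, (d - w σ) j = k * N) := by
        constructor
        · intro j
          rw [hsubapp j]
          exact (hC j).2
        · rw [Finset.sum_congr rfl fun i _ => hsubapp i]
          exact hsubsum
      rw [if_pos hle, hP, coeff_sum_pow hk1, if_pos hcond]
      have hfeq : (fun j : Fin n => (d - w σ) j / k) = f := by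
        funext j
        rw [hsubapp j]
      rw [hfeq]
      have hspec := Nat.multinomial_spec Finset.univ f
      rw [hsumf] at hspec
      have hprodne : ((∏ i : Fin n, (f i).factorial : ℕ) : ℚ) ≠ 0 :=
        Nat.cast_ne_zero.2 (Finset.prod_ne_zero_iff.2 fun i _ => (f i).factorial_ne_zero)
      have hmul : ((Nat.multinomial Finset.univ f : ℕ) : ℚ)
          = (N.factorial : ℚ) / ((∏ i : Fin n, (f i).factorial : ℕ) : ℚ) := by
        rw [eq_div_iff hprodne, mul_comm]
        exact_mod_cast congrArg (Nat.cast : ℕ → ℚ) hspec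
      have hGpos : ∀ i : Fin n, G (σ⁻¹ i) i = (1 : ℚ) / ((f i).factorial : ℚ) := by
        intro i
        rw [hGapp, if_pos (hC i)]
      rw [Int.cast_natCast, hmul]
      rw [Finset.prod_congr rfl fun i _ => hGpos i]
      rw [Finset.prod_div_distrib, Finset.prod_const_one, Nat.cast_prod, mul_one_div]
    · obtain ⟨i0, hi0⟩ := not_forall.1 hC
      have hRHS : ∏ i : Fin n, G (σ⁻¹ i) i = 0 :=
        Finset.prod_eq_zero (Finset.mem_univ i0) (by rw [hGapp]; exact if_neg hi0)
      rw [hRHS, mul_zero]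
      by_cases hle : w σ ≤ d
      · rw [if_pos hle, hP, coeff_sum_pow hk1, if_neg, Int.cast_zero]
        rintro ⟨h1, -⟩
        apply hi0
        refine ⟨Finsupp.le_def.1 hle i0, ?_⟩
        have h3 := h1 i0
        rwa [Finsupp.tsub_apply] at h3
      · rw [if_neg hle, Int.cast_zero]
  have hzq : (z : ℚ) = (N.factorial : ℚ) * G.det := by
    rw [hz, Int.cast_sum]
    have h1 : ∀ σ : Equiv.Perm (Fin n), (((Equiv.Perm.sign σ : ℤ) *
        (if w σ ≤ d then MvPolynomial.coeff (d - w σ) P else 0) : ℤ) : ℚ)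
        = (N.factorial : ℚ) * (((Equiv.Perm.sign σ : ℤ) : ℚ) * ∏ i : Fin n, G (σ⁻¹ i) i) := by
      intro σ
      rw [Int.cast_mul, hterm σ]
      ring
    rw [Finset.sum_congr rfl fun σ _ => h1 σ, ← Finset.mul_sum]
    congr 1
    rw [Matrix.det_apply]
    rw [← Equiv.sum_comp (Equiv.inv (Equiv.Perm (Fin n)))
      (fun σ : Equiv.Perm (Fin n) => Equiv.Perm.sign σ • ∏ i : Fin n, G (σ i) i)]
    apply Finset.sum_congr rfl
    intro σ _
    simp only [Equiv.inv_apply]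
    rw [Equiv.Perm.sign_inv, Units.smul_def, zsmul_eq_mul]
  -- strict monotonicity on residue classes
  have ha : ∀ s, s < k → StrictMono
      (fun i : Fin ((n - 1 - s) / k + 1) => q ((i : ℕ) * k + s + 1) + (i : ℕ)) := by
    intro s hs i j hij
    simp only
    have hjb : (j : ℕ) ≤ (n - 1 - s) / k := by omega
    have hjk : (j : ℕ) * k ≤ n - 1 - s := (Nat.le_div_iff_mul_le hk1).1 hjb
    exact hmono (s + 1) (by omega) (by omega) (i : ℕ) (j : ℕ) hij (by omega)
  -- block triangularity
  have hBT : G.BlockTriangular (fun i : Fin n => (i : ℕ) % k) := by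
    intro i j hlt
    rw [hGapp]
    apply if_neg
    rintro ⟨h1, h2⟩
    obtain ⟨t, ht⟩ := h2
    have hmod1 : ((i : ℕ) + k * t) % k = (i : ℕ) % k := Nat.add_mul_mod_self_left _ _ _
    have hmod2 : (k * q ((j : ℕ) + 1) + (j : ℕ)) % k = (j : ℕ) % k :=
      Nat.mul_add_mod _ _ _
    have heq : k * q ((j : ℕ) + 1) + (j : ℕ) = (i : ℕ) + k * t := by omega
    rw [heq, hmod1] at hmod2
    simp only at hlt
    omega
  have himg : Finset.image (fun i : Fin n => (i : ℕ) % k) Finset.univ = range k := by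
    ext s
    simp only [Finset.mem_image, Finset.mem_range, Finset.mem_univ, true_and]
    constructor
    · rintro ⟨i, rfl⟩
      exact Nat.mod_lt _ (by omega)
    · intro hs
      exact ⟨⟨s, lt_of_lt_of_le hs hkn⟩, Nat.mod_eq_of_lt hs⟩
  set Vn : ℕ → ℕ := fun s => ∏ j : Fin ((n - 1 - s) / k + 1), ∏ i ∈ Iio j,
    ((q ((j : ℕ) * k + s + 1) + (j : ℕ)) - (q ((i : ℕ) * k + s + 1) + (i : ℕ))) with hVn
  set Fn : ℕ → ℕ := fun s =>
    ∏ j : Fin ((n - 1 - s) / k + 1), (q ((j : ℕ) * k + s + 1) + (j : ℕ)).factorial with hFn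
  have hdetG : G.det = ∏ s ∈ range k, ((Vn s : ℚ) / (Fn s : ℚ)) := by
    rw [hBT.det, himg]
    apply Finset.prod_congr rfl
    intro s hs
    have hs' : s < k := Finset.mem_range.1 hs
    exact block_det n k s hk1 hs' hkn q (ha s hs')
  have hVF : ∀ s ∈ range k, Vn s ∣ Fn s :=
    fun s hs => vand_dvd_fact _ (ha s (Finset.mem_range.1 hs))
  have hV0 : ∀ s ∈ range k, Vn s ≠ 0 := by
    intro s hs
    have hs' : s < k := Finset.mem_range.1 hs
    rw [hVn]
    apply Finset.prod_ne_zero_iff.2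
    intro j _
    apply Finset.prod_ne_zero_iff.2
    intro i hi
    have := ha s hs' (Finset.mem_Iio.1 hi)
    simp only at this
    omega
  have hF0 : ∀ s ∈ range k, Fn s ≠ 0 := by
    intro s hs
    rw [hFn]
    exact Finset.prod_ne_zero_iff.2 fun j _ => Nat.factorial_ne_zero _
  set T : ℕ := ∏ s ∈ range k, (Fn s / Vn s) with hT
  have hzT : z * (T : ℤ) = (N.factorial : ℤ) := by
    have hQcast : ((z * (T : ℤ) : ℤ) : ℚ) = ((N.factorial : ℤ) : ℚ) := by
      rw [Int.cast_mul, hzq, hdetG, Int.cast_natCast, hT, Nat.cast_prod]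
      rw [Finset.prod_congr rfl fun s hs => Nat.cast_div (hVF s hs)
        (Nat.cast_ne_zero.2 (hV0 s hs))]
      rw [mul_assoc, ← Finset.prod_mul_distrib]
      have hone : ∀ s ∈ range k, (Vn s : ℚ) / (Fn s : ℚ) * ((Fn s : ℚ) / (Vn s : ℚ)) = 1 := by
        intro s hs
        rw [div_mul_div_comm, mul_comm, div_self]
        exact mul_ne_zero (Nat.cast_ne_zero.2 (hF0 s hs)) (Nat.cast_ne_zero.2 (hV0 s hs))
      rw [Finset.prod_congr rfl hone, Finset.prod_const_one, mul_one, Int.cast_natCast]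
    exact_mod_cast hQcast
  refine ⟨?_, ⟨(T : ℤ), hzT.symm⟩⟩
  intro h0
  rw [h0, zero_mul] at hzT
  exact (Int.natCast_ne_zero.2 N.factorial_ne_zero) hzT.symm
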